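/- Let D be a digraph on a finite vertex type V with |V| = n, let k ≥ 2, let σ : Fin n ≃ V be an ordering of the vertices with feedback arc set S = S(σ), and let λ : V → ZMod k be any labeling. Then there exists x : V → ZMod k such that for every vertex v that is not a head feedback vertex of S (i.e., v is not the head of any arc in S), λ(v) + x(v) + Σ_{u : u → v} x(u) = 0. -/

import Mathlib

open scoped Classical

/-- The feedback arc set of the digraph `adj` with respect to the vertex ordering `σ`:
all arcs `(σ j, σ i)` with `σ j → σ i` and `i < j`. -/
noncomputable def feedbackArcSet {V : Type*} [Fintype V] (adj : V → V → Prop)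
    {n : ℕ} (σ : Fin n ≃ V) : Finset (V × V) :=
  Finset.univ.filter fun p : V × V => adj p.1 p.2 ∧ σ.symm p.2 < σ.symm p.1

/-- `v` is a head feedback vertex: it is the head of some arc of the feedback arc set. -/
def isHeadFeedback {V : Type*} [Fintype V] (adj : V → V → Prop)
    {n : ℕ} (σ : Fin n ≃ V) (v : V) : Prop :=
  ∃ u : V, (u, v) ∈ feedbackArcSet adj σ

/-- For any labeling, the vertices can be toggled so that every vertex that is not a
head feedback vertex ends with label 0. -/
noncomputable def gAux {V : Type*} [Fintype V] (adj : V → V → Prop)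
    {n : ℕ} (σ : Fin n ≃ V) {k : ℕ} (lam : V → ZMod k) : Fin n → ZMod k := fun i =>
  -(lam (σ i) + ∑ j ∈ (Finset.univ.filter
      (fun j : Fin n => j < i ∧ adj (σ j) (σ i))).attach, gAux adj σ lam j.1)
termination_by i => i.val
decreasing_by exact (Finset.mem_filter.mp j.2).2.1

theorem toggle_to_zero_off_headFeedback {V : Type*} [Fintype V]
    (adj : V → V → Prop) (hirr : ∀ v : V, ¬ adj v v)
    (k : ℕ) (hk : 2 ≤ k)
    {n : ℕ} (hn : Fintype.card V = n) (σ : Fin n ≃ V)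
    (lam : V → ZMod k) :
    ∃ x : V → ZMod k, ∀ v : V, ¬ isHeadFeedback adj σ v →
      lam v + x v + ∑ u ∈ Finset.univ.filter (fun u => adj u v), x u = 0 := by
  refine ⟨fun v => gAux adj σ lam (σ.symm v), fun v hv => ?_⟩
  set i := σ.symm v with hi
  have hvi : σ i = v := σ.apply_symm_apply v
  have hsum : ∑ u ∈ Finset.univ.filter (fun u => adj u v), gAux adj σ lam (σ.symm u)
      = ∑ j ∈ Finset.univ.filter (fun j : Fin n => j < i ∧ adj (σ j) (σ i)),
          gAux adj σ lam j := by
    refine Finset.sum_bij (fun u _ => σ.symm u) ?_ ?_ ?_ ?_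
    · intro u hu
      rw [Finset.mem_filter] at hu ⊢
      have hadj : adj u v := hu.2
      have hne : σ.symm u ≠ i := by
        intro h
        apply hirr v
        have : u = v := by
          have := congrArg σ h
          simpa [hvi] using this
        rwa [this] at hadj
      have hnot : ¬ i < σ.symm u := by
        intro hlt
        exact hv ⟨u, by simp [feedbackArcSet, hadj, hi, hlt]; exact hlt⟩
      refine ⟨Finset.mem_univ _, lt_of_le_of_ne (not_lt.mp hnot) hne, ?_⟩
      simpa [hvi] using hadj
    · intro a _ b _ h
      exact σ.symm.injective h
    · intro j hj
      rw [Finset.mem_filter] at hj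
      exact ⟨σ j, by simpa [hvi] using hj.2.2, by simp⟩
    · intro u _; rfl
  rw [hsum, hvi.symm]
  simp only [Equiv.symm_apply_apply]
  rw [gAux.eq_def, Finset.sum_attach]
  ring
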